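/- Let (X,d) be a complete metric space, η : [0,∞) → [0,∞) with η(0) = 0, and φ : X → ℝ lower semicontinuous and bounded below on every bounded subset of X. Assume there exist x₀ ∈ X and a real a ≥ 0 with liminf_{d(x,x₀)→∞} φ(x)/d(x,x₀) > a. Suppose η is nondecreasing on [0,∞) and liminf_{t→0⁺} η(t)/t > 0. Then every mapping T : X → X satisfying η(d(x,Tx)) ≤ φ(x) − φ(Tx) for all x ∈ X has a fixed point. -/
import Mathlib

/-- Ekeland-type minimization lemma: if `φ` is lsc and bounded below on a complete
space, then for any `c > 0` there is a point almost minimizing `φ` which is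
`c`-minimal in the Ekeland sense. -/
theorem li_ekeland_aux {X : Type*} [MetricSpace X] [CompleteSpace X]
    (φ : X → ℝ) (hlsc : LowerSemicontinuous φ)
    (m : ℝ) (hm : ∀ x, m ≤ φ x) (c : ℝ) (hc : 0 < c)
    (x0 : X) :
    ∃ xs : X, φ xs ≤ φ x0 ∧ ∀ y, c * dist xs y ≤ φ xs - φ y → y = xs := by
  have hbR : BddBelow (Set.range φ) := ⟨m, by rintro _ ⟨x, rfl⟩; exact hm x⟩
  -- key recursive choice
  have key : ∀ (x : X) (n : ℕ), ∃ y, c * dist x y ≤ φ x - φ y ∧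
      ∀ z, c * dist x z ≤ φ x - φ z → φ y ≤ φ z + (1/2 : ℝ)^n := by
    intro x n
    set S : Set X := {z | c * dist x z ≤ φ x - φ z} with hS
    have hxS : x ∈ S := by simp [hS]
    have hne : (φ '' S).Nonempty := ⟨φ x, x, hxS, rfl⟩
    have hbb : BddBelow (φ '' S) := ⟨m, by rintro _ ⟨z, _, rfl⟩; exact hm z⟩
    have hlt : sInf (φ '' S) < sInf (φ '' S) + (1/2 : ℝ)^n :=
      lt_add_of_pos_right _ (by positivity)
    obtain ⟨_, ⟨y, hyS, rfl⟩, hy⟩ := exists_lt_of_csInf_lt hne hlt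
    refine ⟨y, hyS, fun z hz => ?_⟩
    have : sInf (φ '' S) ≤ φ z := csInf_le hbb ⟨z, hz, rfl⟩
    linarith
  choose next h1 h2 using key
  set u : ℕ → X := fun n => Nat.rec x0 (fun n xn => next xn n) n with hu
  have hu0 : u 0 = x0 := rfl
  have huS : ∀ n, u (n+1) = next (u n) n := fun n => rfl
  have hstep : ∀ n, c * dist (u n) (u (n+1)) ≤ φ (u n) - φ (u (n+1)) := by
    intro n; rw [huS n]; exact h1 (u n) n
  -- chain inequality
  have hchain : ∀ n m', n ≤ m' → c * dist (u n) (u m') ≤ φ (u n) - φ (u m') := by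
    intro n m' hnm
    induction m', hnm using Nat.le_induction with
    | base => simp
    | succ k hk ih =>
      have h3 := hstep k
      have htri : dist (u n) (u (k+1)) ≤ dist (u n) (u k) + dist (u k) (u (k+1)) :=
        dist_triangle _ _ _
      nlinarith [dist_nonneg (x := u n) (y := u (k+1))]
  have hanti : Antitone (fun n => φ (u n)) := by
    refine antitone_nat_of_succ_le fun n => ?_
    have := hstep n
    nlinarith [dist_nonneg (x := u n) (y := u (n+1))]
  have hbb2 : BddBelow (Set.range fun n => φ (u n)) :=
    ⟨m, by rintro _ ⟨n, rfl⟩; exact hm _⟩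
  set L : ℝ := ⨅ n, φ (u n) with hL
  have hLT : Filter.Tendsto (fun n => φ (u n)) Filter.atTop (nhds L) :=
    tendsto_atTop_ciInf hanti hbb2
  have hLle : ∀ n, L ≤ φ (u n) := fun n => ciInf_le hbb2 n
  -- Cauchy
  have hcauchy : CauchySeq u := by
    apply cauchySeq_of_le_tendsto_0 (fun n => 2 * (φ (u n) - L) / c)
    · intro n m' N hn hm'
      have h4 := hchain N n hn
      have h5 := hchain N m' hm'
      have htri : dist (u n) (u m') ≤ dist (u N) (u n) + dist (u N) (u m') :=
        dist_triangle_left _ _ _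
      have hLn := hLle n
      have hLm := hLle m'
      rw [le_div_iff₀ hc]
      nlinarith
    · have : Filter.Tendsto (fun n => 2 * (φ (u n) - L) / c) Filter.atTop
          (nhds (2 * (L - L) / c)) := by
        exact ((hLT.sub_const L).const_mul 2).div_const c
      simpa using this
  obtain ⟨xs, hxs⟩ := cauchySeq_tendsto_of_complete hcauchy
  -- xs belongs to every S_n
  have hstar1 : ∀ n, c * dist (u n) xs ≤ φ (u n) - L := by
    intro n
    have htend : Filter.Tendsto (fun m' => c * dist (u n) (u m')) Filter.atTop
        (nhds (c * dist (u n) xs)) :=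
      ((Filter.Tendsto.dist tendsto_const_nhds hxs)).const_mul c
    refine le_of_tendsto htend ?_
    filter_upwards [Filter.eventually_ge_atTop n] with m' hm'
    have := hchain n m' hm'
    have := hLle m'
    linarith
  -- lower semicontinuity: φ xs ≤ L
  have hφs : φ xs ≤ L := by
    by_contra h
    push_neg at h
    obtain ⟨y, hy1, hy2⟩ := exists_between h
    have hev : ∀ᶠ x' in nhds xs, y < φ x' := hlsc xs y hy2
    have hev2 : ∀ᶠ n in Filter.atTop, y < φ (u n) := hxs.eventually hev
    have : y ≤ L := ge_of_tendsto hLT (hev2.mono fun n hn => hn.le)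
    linarith
  have hφx0 : φ xs ≤ φ x0 := by
    have := hLle 0
    rw [hu0] at this
    linarith
  refine ⟨xs, hφx0, fun y hy => ?_⟩
  -- y belongs to every S_n
  have hyS : ∀ n, c * dist (u n) y ≤ φ (u n) - φ y := by
    intro n
    have htri : dist (u n) y ≤ dist (u n) xs + dist xs y := dist_triangle _ _ _
    have h4 := hstar1 n
    nlinarith
  have hLy : L ≤ φ y := by
    refine le_of_forall_pos_le_add fun ε hε => ?_
    obtain ⟨n, hn⟩ := exists_pow_lt_of_lt_one hε (by norm_num : (1/2 : ℝ) < 1)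
    have h5 : φ (u (n+1)) ≤ φ y + (1/2:ℝ)^n := by
      rw [huS n]; exact h2 (u n) n y (hyS n)
    have := hLle (n+1)
    linarith
  -- u n → y hence y = xs
  have htend0 : Filter.Tendsto (fun n => dist (u n) y) Filter.atTop (nhds 0) := by
    apply squeeze_zero (fun n => dist_nonneg) (g := fun n => (φ (u n) - L) / c)
    · intro n
      have := hyS n
      rw [le_div_iff₀ hc]
      nlinarith
    · have : Filter.Tendsto (fun n => (φ (u n) - L) / c) Filter.atTop
          (nhds ((L - L) / c)) := (hLT.sub_const L).div_const c
      simpa using this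
  have huy : Filter.Tendsto u Filter.atTop (nhds y) := by
    rw [tendsto_iff_dist_tendsto_zero]
    exact htend0
  exact tendsto_nhds_unique huy hxs

/-- Li's Theorem 2, case (i). -/
theorem li_theorem2_case_i {X : Type*} [MetricSpace X] [CompleteSpace X] [Nonempty X]
    (η : ℝ → ℝ) (hη0 : η 0 = 0) (hηnn : ∀ t, 0 ≤ t → 0 ≤ η t)
    (φ : X → ℝ) (hlsc : LowerSemicontinuous φ)
    (hbdd : ∀ S : Set X, Bornology.IsBounded S → BddBelow (φ '' S))
    (x₀ : X) (a : ℝ) (ha : 0 ≤ a)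
    (hliminf : ∃ b > a, ∃ r > (0 : ℝ), ∀ x : X, r ≤ dist x x₀ → b ≤ φ x / dist x x₀)
    (hmono : ∀ s t : ℝ, 0 ≤ s → s ≤ t → η s ≤ η t)
    (hliminfη : ∃ c > (0 : ℝ), ∃ δ > (0 : ℝ), ∀ t : ℝ, 0 < t → t < δ → c * t ≤ η t)
    (T : X → X) (hT : ∀ x, η (dist x (T x)) ≤ φ x - φ (T x)) :
    ∃ x, T x = x := by
  obtain ⟨b, hb, r, hr, hfar⟩ := hliminf
  obtain ⟨c, hc, δ, hδ, hsmall⟩ := hliminfη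
  -- global lower bound for φ
  obtain ⟨M, hM⟩ := hbdd (Metric.closedBall x₀ r) Metric.isBounded_closedBall
  have hm : ∀ x, min M 0 ≤ φ x := by
    intro x
    by_cases h : dist x x₀ ≤ r
    · exact le_trans (min_le_left _ _) (hM ⟨x, Metric.mem_closedBall.mpr h, rfl⟩)
    · push_neg at h
      have hd : 0 < dist x x₀ := lt_trans hr h
      have := hfar x h.le
      rw [le_div_iff₀ hd] at this
      have hb0 : 0 < b := lt_of_le_of_lt ha hb
      nlinarith [min_le_right M (0:ℝ)]
  have hbR : BddBelow (Set.range φ) := ⟨min M 0, by rintro _ ⟨x, rfl⟩; exact hm x⟩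
  have hneR : (Set.range φ).Nonempty := Set.range_nonempty φ
  -- starting point with φ close to infimum
  have hε : (0:ℝ) < c * δ / 4 := by positivity
  obtain ⟨_, ⟨x0, rfl⟩, hx0⟩ := exists_lt_of_csInf_lt hneR
    (lt_add_of_pos_right (sInf (Set.range φ)) hε)
  obtain ⟨xs, hxs1, hxs2⟩ := li_ekeland_aux φ hlsc (min M 0) hm c hc x0
  refine ⟨xs, ?_⟩
  by_contra hne
  set d := dist xs (T xs) with hd
  have hdpos : 0 < d := dist_pos.mpr (fun h => hne h.symm)
  have hTx := hT xs
  by_cases hcase : d < δ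
  · -- small distance: c * d ≤ η d ≤ φ xs - φ (T xs), minimality forces T xs = xs
    have h6 : c * d ≤ η d := hsmall d hdpos hcase
    exact hne (hxs2 (T xs) (le_trans h6 hTx))
  · -- large distance: φ (T xs) drops below the infimum
    push_neg at hcase
    have h7 : c * (δ/2) ≤ η (δ/2) := hsmall (δ/2) (by positivity) (by linarith)
    have h8 : η (δ/2) ≤ η d := hmono (δ/2) d (by positivity) (by linarith)
    have h9 : sInf (Set.range φ) ≤ φ (T xs) := csInf_le hbR ⟨T xs, rfl⟩
    linarith
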